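/- There exists a continuous function s : ℝ^m \ Z → (0,∞) such that for every y ∈ ℝ^m \ Z and every η ∈ (0, s(y)], one has f(y,η) ≤ 0, i.e. V(y + η F(y)) − V(y) ≤ λ η V̇(y). -/

import Mathlib

open Filter

/-- The Lyapunov derivative `V̇(y) = ⟪∇V(y), F(y)⟫`. -/
noncomputable def lyapDeriv {m : ℕ}
    (F : EuclideanSpace ℝ (Fin m) → EuclideanSpace ℝ (Fin m))
    (V : EuclideanSpace ℝ (Fin m) → ℝ) (y : EuclideanSpace ℝ (Fin m)) : ℝ :=
  inner ℝ (gradient V y) (F y)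

set_option maxHeartbeats 1000000 in
/-- **Selection Theorem.** There is a continuous function `s : ℝ^m \ Z → (0,∞)` such that for
all `y ∉ Z` and all step sizes `η ∈ (0, s y]` the dissipation inequality
`f(y,η) = V (y + η • F y) - V y - λ η V̇(y) ≤ 0` holds, where `Z = {y | V̇(y) = 0}`. -/
theorem selection_theorem
    {m : ℕ} (lam : ℝ) (hlam : lam ∈ Set.Ioo (0 : ℝ) 1)
    (F : EuclideanSpace ℝ (Fin m) → EuclideanSpace ℝ (Fin m))
    (V : EuclideanSpace ℝ (Fin m) → ℝ)
    (hF : Continuous F) (hV : ContDiff ℝ 2 V) (hV0 : ∀ y, 0 ≤ V y)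
    (hVdot : ∀ y, lyapDeriv F V y ≤ 0) :
    ∃ s : EuclideanSpace ℝ (Fin m) → ℝ,
      ContinuousOn s {y | lyapDeriv F V y ≠ 0} ∧
      ∀ y, lyapDeriv F V y ≠ 0 →
        0 < s y ∧
        ∀ η : ℝ, 0 < η → η ≤ s y →
          V (y + η • F y) - V y - lam * η * lyapDeriv F V y ≤ 0 := by
  classical
  -- continuity of the gradient
  have hfd : Continuous (fderiv ℝ V) := hV.continuous_fderiv (by norm_num)
  have hgrad : Continuous (gradient V) := by
    have : Continuous ((InnerProductSpace.toDual ℝ (EuclideanSpace ℝ (Fin m))).symm ∘ fderiv ℝ V) :=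
      (InnerProductSpace.toDual ℝ (EuclideanSpace ℝ (Fin m))).symm.continuous.comp hfd
    exact this
  have hlyap : Continuous (lyapDeriv F V) := by
    unfold lyapDeriv; exact hgrad.inner hF
  have hVc : Continuous V := hV.continuous
  have hVd : Differentiable ℝ V := hV.differentiable (by norm_num)
  -- derivative of τ ↦ V (y + τ • F y)
  have key_deriv : ∀ (y : EuclideanSpace ℝ (Fin m)) (τ : ℝ),
      HasDerivAt (fun t : ℝ => V (y + t • F y))
        (inner ℝ (gradient V (y + τ • F y)) (F y)) τ := by
    intro y τ
    have hline : HasDerivAt (fun t : ℝ => y + t • F y) (F y) τ := by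
      simpa using ((hasDerivAt_id τ).smul_const (F y)).const_add y
    have := (hVd (y + τ • F y)).hasFDerivAt.comp_hasDerivAt τ hline
    have heq : inner ℝ (gradient V (y + τ • F y)) (F y) =
        fderiv ℝ V (y + τ • F y) (F y) := by
      simpa [gradient] using
        (InnerProductSpace.toDual_symm_apply (𝕜 := ℝ) (E := EuclideanSpace ℝ (Fin m))
          (y := fderiv ℝ V (y + τ • F y)) (x := F y))
    rw [heq]; exact this
  -- the continuous "slope" function
  set Φ : EuclideanSpace ℝ (Fin m) × ℝ → ℝ := fun p =>
    inner ℝ (gradient V (p.1 + p.2 • F p.1)) (F p.1) - lam * lyapDeriv F V p.1 with hΦdef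
  have hΦc : Continuous Φ := by
    apply Continuous.sub
    · exact (hgrad.comp (continuous_fst.add (continuous_snd.smul (hF.comp continuous_fst)))).inner
        (hF.comp continuous_fst)
    · exact continuous_const.mul (hlyap.comp continuous_fst)
  -- target sets
  set tset : EuclideanSpace ℝ (Fin m) → Set ℝ := fun y =>
    {c | 0 < c ∧ ∀ η : ℝ, 0 < η → η ≤ c →
      V (y + η • F y) - V y - lam * η * lyapDeriv F V y ≤ 0} with htset
  have hconv : ∀ y, Convex ℝ (tset y) := by
    intro y
    rw [convex_iff_ordConnected]
    constructor
    intro a ha b hb c hc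
    refine ⟨lt_of_lt_of_le ha.1 hc.1, fun η hη hηc => ?_⟩
    exact hb.2 η hη (hηc.trans hc.2)
  -- the set U
  set U : Set (EuclideanSpace ℝ (Fin m)) := {y | lyapDeriv F V y ≠ 0} with hU
  -- local constant selection on the subtype
  have hlocal : ∀ x : U, ∃ c : ℝ, ∀ᶠ y : U in nhds x, c ∈ tset y.1 := by
    rintro ⟨x, hx⟩
    have hxneg : lyapDeriv F V x < 0 := lt_of_le_of_ne (hVdot x) hx
    have hΦx : Φ (x, 0) < 0 := by
      have : Φ (x, 0) = (1 - lam) * lyapDeriv F V x := by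
        simp [hΦdef, lyapDeriv]; ring
      rw [this]
      exact mul_neg_of_pos_of_neg (by linarith [hlam.2]) hxneg
    -- neighborhood where Φ < 0
    have hopen : IsOpen (Φ ⁻¹' Set.Iio 0) := isOpen_Iio.preimage hΦc
    obtain ⟨δ, hδpos, hδ⟩ := Metric.isOpen_iff.1 hopen (x, 0) hΦx
    have hmem : ∀ y : EuclideanSpace ℝ (Fin m), dist y x < δ → (δ / 2) ∈ tset y := by
      intro y hy
      refine ⟨by linarith, fun η hη hηc => ?_⟩
      set ψ : ℝ → ℝ := fun t => V (y + t • F y) - V y - lam * t * lyapDeriv F V y with hψ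
      have hψd : ∀ τ : ℝ, HasDerivAt ψ (Φ (y, τ)) τ := by
        intro τ
        have h1 := key_deriv y τ
        have h2 : HasDerivAt (fun t : ℝ => V y + lam * t * lyapDeriv F V y)
            (lam * lyapDeriv F V y) τ := by
          simpa [mul_assoc, mul_comm, mul_left_comm] using
            (((hasDerivAt_id τ).const_mul lam).mul_const (lyapDeriv F V y)).const_add (V y)
        have := h1.sub h2
        simpa [hψ, hΦdef, sub_sub, Pi.sub_def] using this
      have hcont : ContinuousOn ψ (Set.Icc 0 η) :=
        (Continuous.continuousOn (by fun_prop) : ContinuousOn ψ _)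
      obtain ⟨τ, hτ, hτeq⟩ := exists_hasDerivAt_eq_slope ψ (fun t => Φ (y, t)) hη
        hcont (fun t _ => hψd t)
      have hΦneg : Φ (y, τ) < 0 := by
        apply hδ
        rw [Metric.mem_ball, Prod.dist_eq]
        simp only [max_lt_iff]
        constructor
        · exact hy
        · rw [Real.dist_eq, sub_zero, abs_of_pos hτ.1]
          calc τ < η := hτ.2
          _ ≤ δ / 2 := hηc
          _ < δ := by linarith
      have hψ0 : ψ 0 = 0 := by simp [hψ]
      have : (ψ η - ψ 0) / (η - 0) < 0 := hτeq ▸ hΦneg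
      rw [hψ0, sub_zero, sub_zero, div_neg_iff] at this
      rcases this with ⟨_, h⟩ | ⟨h, _⟩
      · linarith
      · exact h.le
    refine ⟨δ / 2, ?_⟩
    have hball : ∀ᶠ y in nhds (x : EuclideanSpace ℝ (Fin m)), dist y x < δ :=
      Metric.ball_mem_nhds x hδpos
    exact (continuous_subtype_val.tendsto (⟨x, hx⟩ : U)).eventually hball |>.mono
      fun y hy => hmem y hy
  obtain ⟨g, hg⟩ := exists_continuous_forall_mem_convex_of_local_const
    (t := fun x : U => tset (x : EuclideanSpace ℝ (Fin m))) (fun x => hconv x) hlocal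
  refine ⟨fun y => if h : lyapDeriv F V y ≠ 0 then g ⟨y, h⟩ else 1, ?_, ?_⟩
  · rw [continuousOn_iff_continuous_restrict]
    have : (Set.restrict {y | lyapDeriv F V y ≠ 0}
        fun y => if h : lyapDeriv F V y ≠ 0 then g ⟨y, h⟩ else 1) = fun x => g x := by
      funext x
      exact dif_pos x.2
    refine (congrArg Continuous this).mpr ?_
    exact g.continuous
  · intro y hy
    have h1 := hg ⟨y, hy⟩
    simp only [dif_pos hy]
    exact ⟨h1.1, h1.2⟩
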